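/- For every subgraph H of G1 with maximum degree at most 3, the graph G1 − E(H) contains a subgraph isomorphic to K4 or a subgraph isomorphic to a member of 𝒥. -/

import Mathlib

/-- The simple graph on `V` whose edges are the (symmetrized) pairs in the list `l`. -/
def graphOfList {V : Type*} (l : List (V × V)) : SimpleGraph V :=
  SimpleGraph.fromRel (fun x y => (x, y) ∈ l)

/-- The complete graph on four vertices. -/
def K4 : SimpleGraph (Fin 4) := ⊤

/-- `G` contains a subgraph isomorphic to the pattern graph `P`. -/
def ContainsSub {W V : Type*} (P : SimpleGraph W) (G : SimpleGraph V) : Prop :=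
  ∃ f : W ↪ V, ∀ ⦃a b : W⦄, P.Adj a b → G.Adj (f a) (f b)

/-- The member of the family 𝒥 determined by `s : Fin 6 → Bool`: vertices are
`a = Sum.inl 0`, `b = Sum.inl 1`, and `c i = Sum.inr (i,0)`, `d i = Sum.inr (i,1)`,
`e i = Sum.inr (i,2)`; the `i`-th copy is `J1` if `s i = true` and `J2` otherwise. -/
def Jfam (s : Fin 6 → Bool) : SimpleGraph (Sum (Fin 2) (Fin 6 × Fin 3)) :=
  SimpleGraph.fromRel (fun x y =>
    (x = Sum.inl 0 ∧ y = Sum.inl 1) ∨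
    ∃ i : Fin 6,
      (x = Sum.inl 0 ∧ y = Sum.inr (i, 0)) ∨
      (x = Sum.inl 1 ∧ y = Sum.inr (i, 0)) ∨
      (x = Sum.inl 0 ∧ y = Sum.inr (i, 2)) ∨
      (x = Sum.inl 1 ∧ y = Sum.inr (i, 2)) ∨
      (x = Sum.inr (i, 0) ∧ y = Sum.inr (i, 1)) ∨
      (x = Sum.inr (i, 1) ∧ y = Sum.inr (i, 2)) ∨
      (s i = true ∧ x = Sum.inl 0 ∧ y = Sum.inr (i, 1)) ∨
      (s i = false ∧ x = Sum.inl 1 ∧ y = Sum.inr (i, 1)))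

/-- The graph `J3`, with vertices `a,…,k` encoded as `0,…,10`. -/
def J3 : SimpleGraph (Fin 11) :=
  graphOfList [(0,1),
    (0,2), (0,3), (0,4), (0,5), (0,6),
    (1,2), (1,3), (1,4), (1,5), (1,6),
    (2,3), (3,4), (4,5), (5,6),
    (7,0), (7,3), (7,4),
    (8,0), (8,4), (8,5),
    (9,1), (9,3), (9,4),
    (10,1), (10,4), (10,5)]

/-- The map placing the `t`-th copy of `J3` into `S`: the handle vertices `a = 0` and
`b = 1` of `J3` go to the common handle vertices `Sum.inl 0` and `Sum.inl 1`, and the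
remaining nine vertices of the copy go to `Sum.inr (t, ·)`. -/
def mp (t : Fin 9) (m : Fin 11) : Sum (Fin 2) (Fin 9 × Fin 9) :=
  if m.val = 0 then Sum.inl 0
  else if m.val = 1 then Sum.inl 1
  else Sum.inr (t, ⟨m.val - 2, by have := m.isLt; omega⟩)

/-- The graph `S`, obtained from nine copies of `J3` by identifying the nine edges
corresponding to `ab` into the single edge joining `Sum.inl 0` and `Sum.inl 1`. -/
def S : SimpleGraph (Sum (Fin 2) (Fin 9 × Fin 9)) :=
  SimpleGraph.fromRel (fun x y =>
    ∃ t : Fin 9, ∃ p q : Fin 11, J3.Adj p q ∧ x = mp t p ∧ y = mp t q)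


/-- The map placing the `i`-th copy of `S` into `G1`: the handle vertex `a = Sum.inl 0`
of `S` goes to the star center `u`, the handle vertex `b = Sum.inl 1` goes to the leaf
`v i`, and the remaining vertices of the copy go to `Sum.inr (i, ·)`. -/
def mg (i : Fin 4) :
    Sum (Fin 2) (Fin 9 × Fin 9) → Sum (Sum Unit (Fin 4)) (Fin 4 × (Fin 9 × Fin 9))
  | Sum.inl j => if j = 0 then Sum.inl (Sum.inl ()) else Sum.inl (Sum.inr i)
  | Sum.inr p => Sum.inr (i, p)

/-- The graph `G1`, obtained from a star with center `u = Sum.inl (Sum.inl ())` and four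
leaves `v i = Sum.inl (Sum.inr i)` by attaching, for each `i`, a copy of `S` whose handle
is identified with the edge `u (v i)`. -/
def G1 : SimpleGraph (Sum (Sum Unit (Fin 4)) (Fin 4 × (Fin 9 × Fin 9))) :=
  SimpleGraph.fromRel (fun x y =>
    ∃ i : Fin 4, ∃ p q : Sum (Fin 2) (Fin 9 × Fin 9), S.Adj p q ∧ x = mg i p ∧ y = mg i q)


abbrev V1 := Sum (Sum Unit (Fin 4)) (Fin 4 × (Fin 9 × Fin 9))

def uu : V1 := Sum.inl (Sum.inl ())
def vv (i : Fin 4) : V1 := Sum.inl (Sum.inr i)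
def φ (i : Fin 4) (t : Fin 9) (m : Fin 11) : V1 := mg i (mp t m)

lemma mp_inj : ∀ (t : Fin 9) (p q : Fin 11), mp t p = mp t q → p = q := by decide

lemma phi_inj : ∀ (i : Fin 4) (t : Fin 9) (p q : Fin 11), φ i t p = φ i t q → p = q := by decide

lemma phi0 (i : Fin 4) (t : Fin 9) : φ i t 0 = uu := rfl
lemma phi1 (i : Fin 4) (t : Fin 9) : φ i t 1 = vv i := rfl

lemma phi_inr (i : Fin 4) (t : Fin 9) (m : Fin 11) (h : 2 ≤ m.val) :
    φ i t m = Sum.inr (i, (t, ⟨m.val - 2, by omega⟩)) := by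
  unfold φ mp
  rw [if_neg (by omega), if_neg (by omega)]
  rfl

lemma adjG1 (i : Fin 4) (t : Fin 9) {p q : Fin 11} (h : J3.Adj p q) :
    G1.Adj (φ i t p) (φ i t q) := by
  have hne : p ≠ q := h.ne
  have hS : S.Adj (mp t p) (mp t q) :=
    ⟨fun hmp => hne (mp_inj t p q hmp), Or.inl ⟨t, p, q, h, rfl, rfl⟩⟩
  exact ⟨fun hp => hne (phi_inj i t p q hp), Or.inl ⟨i, mp t p, mp t q, hS, rfl, rfl⟩⟩



lemma phne (i : Fin 4) (t : Fin 9) (p q : Fin 11) (h : p ≠ q) : φ i t p ≠ φ i t q :=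
  fun he => h (phi_inj i t p q he)

lemma no4 {H : SimpleGraph V1} (hdeg : ∀ v, (H.neighborSet v).ncard ≤ 3)
    (v x1 x2 x3 x4 : V1) (h12 : x1 ≠ x2) (h13 : x1 ≠ x3) (h14 : x1 ≠ x4)
    (h23 : x2 ≠ x3) (h24 : x2 ≠ x4) (h34 : x3 ≠ x4)
    (a1 : H.Adj v x1) (a2 : H.Adj v x2) (a3 : H.Adj v x3) (a4 : H.Adj v x4) : False := by
  have hsub : ({x1, x2, x3, x4} : Set V1) ⊆ H.neighborSet v := by
    intro x hx
    simp only [Set.mem_insert_iff, Set.mem_singleton_iff] at hx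
    rcases hx with rfl | rfl | rfl | rfl
    · exact a1
    · exact a2
    · exact a3
    · exact a4
  have hc : ({x1, x2, x3, x4} : Set V1).ncard = 4 := by
    rw [Set.ncard_insert_of_notMem (by simp [h12, h13, h14]) (Set.toFinite _),
        Set.ncard_insert_of_notMem (by simp [h23, h24]) (Set.toFinite _),
        Set.ncard_insert_of_notMem (by simp [h34]) (Set.toFinite _),
        Set.ncard_singleton]
  have hle := Set.ncard_le_ncard hsub (Set.toFinite _)
  have h4 := hdeg v
  omega

instance J3adjDec : DecidableRel J3.Adj := fun p q =>
  decidable_of_iff (p ≠ q ∧ (((p, q) ∈ [((0:Fin 11),(1:Fin 11)),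
    (0,2), (0,3), (0,4), (0,5), (0,6),
    (1,2), (1,3), (1,4), (1,5), (1,6),
    (2,3), (3,4), (4,5), (5,6),
    (7,0), (7,3), (7,4),
    (8,0), (8,4), (8,5),
    (9,1), (9,3), (9,4),
    (10,1), (10,4), (10,5)]) ∨ ((q, p) ∈ [((0:Fin 11),(1:Fin 11)),
    (0,2), (0,3), (0,4), (0,5), (0,6),
    (1,2), (1,3), (1,4), (1,5), (1,6),
    (2,3), (3,4), (4,5), (5,6),
    (7,0), (7,3), (7,4),
    (8,0), (8,4), (8,5),
    (9,1), (9,3), (9,4),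
    (10,1), (10,4), (10,5)]))) Iff.rfl

lemma containsK4_of {G : SimpleGraph V1} (x0 x1 x2 x3 : V1)
    (h01 : G.Adj x0 x1) (h02 : G.Adj x0 x2) (h03 : G.Adj x0 x3)
    (h12 : G.Adj x1 x2) (h13 : G.Adj x1 x3) (h23 : G.Adj x2 x3) :
    ContainsSub K4 G := by
  have n01 := h01.ne; have n02 := h02.ne; have n03 := h03.ne
  have n12 := h12.ne; have n13 := h13.ne; have n23 := h23.ne
  refine ⟨⟨![x0, x1, x2, x3], ?_⟩, ?_⟩
  · intro a b hab
    fin_cases a <;> fin_cases b <;> simp_all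
  · intro a b hab
    have hne : a ≠ b := hab.ne
    fin_cases a <;> fin_cases b <;> simp_all <;>
      first
        | exact h01 | exact h01.symm | exact h02 | exact h02.symm | exact h03 | exact h03.symm
        | exact h12 | exact h12.symm | exact h13 | exact h13.symm | exact h23 | exact h23.symm

def Gadget (H : SimpleGraph V1) (i : Fin 4) (t : Fin 9) : Prop :=
  ∃ (x y z : Fin 11) (sb : Bool), 2 ≤ x.val ∧ 2 ≤ y.val ∧ 2 ≤ z.val ∧ x ≠ y ∧ x ≠ z ∧ y ≠ z ∧
    (G1 \ H).Adj uu (φ i t x) ∧ (G1 \ H).Adj (vv i) (φ i t x) ∧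
    (G1 \ H).Adj uu (φ i t z) ∧ (G1 \ H).Adj (vv i) (φ i t z) ∧
    (G1 \ H).Adj (φ i t x) (φ i t y) ∧ (G1 \ H).Adj (φ i t y) (φ i t z) ∧
    (sb = true → (G1 \ H).Adj uu (φ i t y)) ∧ (sb = false → (G1 \ H).Adj (vv i) (φ i t y))

set_option maxHeartbeats 4000000 in
set_option synthInstance.maxSize 4000 in
set_option synthInstance.maxHeartbeats 4000000 in
lemma keyCheck : ∀ b0 b1 b2 b3 b4 b5 b6 b7 b8 b9 b10 b11 : Bool,
    (b0 = true → b1 = true → b4 = true → b8 = true → False) →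
    (b2 = true → b3 = true → b7 = true → b11 = true → False) →
    (b1 = true → b2 = true → b5 = true → b6 = true → False) →
    (b1 = true → b2 = true → b5 = true → b9 = true → False) →
    (b1 = true → b2 = true → b5 = true → b10 = true → False) →
    (b1 = true → b2 = true → b6 = true → b9 = true → False) →
    (b1 = true → b2 = true → b6 = true → b10 = true → False) →
    (b1 = true → b2 = true → b9 = true → b10 = true → False) →
    (b1 = true → b5 = true → b6 = true → b9 = true → False) →
    (b1 = true → b5 = true → b6 = true → b10 = true → False) →
    (b1 = true → b5 = true → b9 = true → b10 = true → False) →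
    (b1 = true → b6 = true → b9 = true → b10 = true → False) →
    (b2 = true → b5 = true → b6 = true → b9 = true → False) →
    (b2 = true → b5 = true → b6 = true → b10 = true → False) →
    (b2 = true → b5 = true → b9 = true → b10 = true → False) →
    (b2 = true → b6 = true → b9 = true → b10 = true → False) →
    (b5 = true → b6 = true → b9 = true → b10 = true → False) →
    b0 = false ∨ b1 = false ∨ b2 = false ∨ b3 = false ∨
    (b4 = false ∧ b5 = false) ∨ (b6 = false ∧ b7 = false) ∨
    (b8 = false ∧ b9 = false) ∨ (b10 = false ∧ b11 = false) := by decide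

lemma copyLemma (H : SimpleGraph V1) [DecidableRel H.Adj] (hdeg : ∀ v, (H.neighborSet v).ncard ≤ 3)
    (i : Fin 4) (t : Fin 9)
    (hu : ∀ m : Fin 11, ¬ H.Adj uu (φ i t m))
    (hv : ∀ m : Fin 11, ¬ H.Adj (vv i) (φ i t m)) :
    ContainsSub K4 (G1 \ H) ∨ Gadget H i t := by
  have sd : ∀ p q : Fin 11, J3.Adj p q → ¬ H.Adj (φ i t p) (φ i t q) →
      (G1 \ H).Adj (φ i t p) (φ i t q) := by
    intro p q h hn
    rw [SimpleGraph.sdiff_adj]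
    exact ⟨adjG1 i t h, hn⟩
  have c3 : (decide (H.Adj (φ i t 2) (φ i t 3))) = true → (decide (H.Adj (φ i t 3) (φ i t 4))) = true → (decide (H.Adj (φ i t 7) (φ i t 3))) = true → (decide (H.Adj (φ i t 9) (φ i t 3))) = true → False := fun e0 e1 e4 e8 =>
    no4 hdeg (φ i t 3) (φ i t 2) (φ i t 4) (φ i t 7) (φ i t 9) (phne i t 2 4 (by decide)) (phne i t 2 7 (by decide)) (phne i t 2 9 (by decide)) (phne i t 4 7 (by decide)) (phne i t 4 9 (by decide)) (phne i t 7 9 (by decide))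
      (of_decide_eq_true e0).symm (of_decide_eq_true e1) (of_decide_eq_true e4).symm (of_decide_eq_true e8).symm
  have c5 : (decide (H.Adj (φ i t 4) (φ i t 5))) = true → (decide (H.Adj (φ i t 5) (φ i t 6))) = true → (decide (H.Adj (φ i t 8) (φ i t 5))) = true → (decide (H.Adj (φ i t 10) (φ i t 5))) = true → False := fun e2 e3 e7 e11 =>
    no4 hdeg (φ i t 5) (φ i t 4) (φ i t 6) (φ i t 8) (φ i t 10) (phne i t 4 6 (by decide)) (phne i t 4 8 (by decide)) (phne i t 4 10 (by decide)) (phne i t 6 8 (by decide)) (phne i t 6 10 (by decide)) (phne i t 8 10 (by decide))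
      (of_decide_eq_true e2).symm (of_decide_eq_true e3) (of_decide_eq_true e7).symm (of_decide_eq_true e11).symm
  have c4_0 : (decide (H.Adj (φ i t 3) (φ i t 4))) = true → (decide (H.Adj (φ i t 4) (φ i t 5))) = true → (decide (H.Adj (φ i t 7) (φ i t 4))) = true → (decide (H.Adj (φ i t 8) (φ i t 4))) = true → False := fun e1 e2 e5 e6 =>
    no4 hdeg (φ i t 4) (φ i t 3) (φ i t 5) (φ i t 7) (φ i t 8) (phne i t 3 5 (by decide)) (phne i t 3 7 (by decide)) (phne i t 3 8 (by decide)) (phne i t 5 7 (by decide)) (phne i t 5 8 (by decide)) (phne i t 7 8 (by decide))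
      (of_decide_eq_true e1).symm (of_decide_eq_true e2) (of_decide_eq_true e5).symm (of_decide_eq_true e6).symm
  have c4_1 : (decide (H.Adj (φ i t 3) (φ i t 4))) = true → (decide (H.Adj (φ i t 4) (φ i t 5))) = true → (decide (H.Adj (φ i t 7) (φ i t 4))) = true → (decide (H.Adj (φ i t 9) (φ i t 4))) = true → False := fun e1 e2 e5 e9 =>
    no4 hdeg (φ i t 4) (φ i t 3) (φ i t 5) (φ i t 7) (φ i t 9) (phne i t 3 5 (by decide)) (phne i t 3 7 (by decide)) (phne i t 3 9 (by decide)) (phne i t 5 7 (by decide)) (phne i t 5 9 (by decide)) (phne i t 7 9 (by decide))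
      (of_decide_eq_true e1).symm (of_decide_eq_true e2) (of_decide_eq_true e5).symm (of_decide_eq_true e9).symm
  have c4_2 : (decide (H.Adj (φ i t 3) (φ i t 4))) = true → (decide (H.Adj (φ i t 4) (φ i t 5))) = true → (decide (H.Adj (φ i t 7) (φ i t 4))) = true → (decide (H.Adj (φ i t 10) (φ i t 4))) = true → False := fun e1 e2 e5 e10 =>
    no4 hdeg (φ i t 4) (φ i t 3) (φ i t 5) (φ i t 7) (φ i t 10) (phne i t 3 5 (by decide)) (phne i t 3 7 (by decide)) (phne i t 3 10 (by decide)) (phne i t 5 7 (by decide)) (phne i t 5 10 (by decide)) (phne i t 7 10 (by decide))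
      (of_decide_eq_true e1).symm (of_decide_eq_true e2) (of_decide_eq_true e5).symm (of_decide_eq_true e10).symm
  have c4_3 : (decide (H.Adj (φ i t 3) (φ i t 4))) = true → (decide (H.Adj (φ i t 4) (φ i t 5))) = true → (decide (H.Adj (φ i t 8) (φ i t 4))) = true → (decide (H.Adj (φ i t 9) (φ i t 4))) = true → False := fun e1 e2 e6 e9 =>
    no4 hdeg (φ i t 4) (φ i t 3) (φ i t 5) (φ i t 8) (φ i t 9) (phne i t 3 5 (by decide)) (phne i t 3 8 (by decide)) (phne i t 3 9 (by decide)) (phne i t 5 8 (by decide)) (phne i t 5 9 (by decide)) (phne i t 8 9 (by decide))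
      (of_decide_eq_true e1).symm (of_decide_eq_true e2) (of_decide_eq_true e6).symm (of_decide_eq_true e9).symm
  have c4_4 : (decide (H.Adj (φ i t 3) (φ i t 4))) = true → (decide (H.Adj (φ i t 4) (φ i t 5))) = true → (decide (H.Adj (φ i t 8) (φ i t 4))) = true → (decide (H.Adj (φ i t 10) (φ i t 4))) = true → False := fun e1 e2 e6 e10 =>
    no4 hdeg (φ i t 4) (φ i t 3) (φ i t 5) (φ i t 8) (φ i t 10) (phne i t 3 5 (by decide)) (phne i t 3 8 (by decide)) (phne i t 3 10 (by decide)) (phne i t 5 8 (by decide)) (phne i t 5 10 (by decide)) (phne i t 8 10 (by decide))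
      (of_decide_eq_true e1).symm (of_decide_eq_true e2) (of_decide_eq_true e6).symm (of_decide_eq_true e10).symm
  have c4_5 : (decide (H.Adj (φ i t 3) (φ i t 4))) = true → (decide (H.Adj (φ i t 4) (φ i t 5))) = true → (decide (H.Adj (φ i t 9) (φ i t 4))) = true → (decide (H.Adj (φ i t 10) (φ i t 4))) = true → False := fun e1 e2 e9 e10 =>
    no4 hdeg (φ i t 4) (φ i t 3) (φ i t 5) (φ i t 9) (φ i t 10) (phne i t 3 5 (by decide)) (phne i t 3 9 (by decide)) (phne i t 3 10 (by decide)) (phne i t 5 9 (by decide)) (phne i t 5 10 (by decide)) (phne i t 9 10 (by decide))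
      (of_decide_eq_true e1).symm (of_decide_eq_true e2) (of_decide_eq_true e9).symm (of_decide_eq_true e10).symm
  have c4_6 : (decide (H.Adj (φ i t 3) (φ i t 4))) = true → (decide (H.Adj (φ i t 7) (φ i t 4))) = true → (decide (H.Adj (φ i t 8) (φ i t 4))) = true → (decide (H.Adj (φ i t 9) (φ i t 4))) = true → False := fun e1 e5 e6 e9 =>
    no4 hdeg (φ i t 4) (φ i t 3) (φ i t 7) (φ i t 8) (φ i t 9) (phne i t 3 7 (by decide)) (phne i t 3 8 (by decide)) (phne i t 3 9 (by decide)) (phne i t 7 8 (by decide)) (phne i t 7 9 (by decide)) (phne i t 8 9 (by decide))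
      (of_decide_eq_true e1).symm (of_decide_eq_true e5).symm (of_decide_eq_true e6).symm (of_decide_eq_true e9).symm
  have c4_7 : (decide (H.Adj (φ i t 3) (φ i t 4))) = true → (decide (H.Adj (φ i t 7) (φ i t 4))) = true → (decide (H.Adj (φ i t 8) (φ i t 4))) = true → (decide (H.Adj (φ i t 10) (φ i t 4))) = true → False := fun e1 e5 e6 e10 =>
    no4 hdeg (φ i t 4) (φ i t 3) (φ i t 7) (φ i t 8) (φ i t 10) (phne i t 3 7 (by decide)) (phne i t 3 8 (by decide)) (phne i t 3 10 (by decide)) (phne i t 7 8 (by decide)) (phne i t 7 10 (by decide)) (phne i t 8 10 (by decide))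
      (of_decide_eq_true e1).symm (of_decide_eq_true e5).symm (of_decide_eq_true e6).symm (of_decide_eq_true e10).symm
  have c4_8 : (decide (H.Adj (φ i t 3) (φ i t 4))) = true → (decide (H.Adj (φ i t 7) (φ i t 4))) = true → (decide (H.Adj (φ i t 9) (φ i t 4))) = true → (decide (H.Adj (φ i t 10) (φ i t 4))) = true → False := fun e1 e5 e9 e10 =>
    no4 hdeg (φ i t 4) (φ i t 3) (φ i t 7) (φ i t 9) (φ i t 10) (phne i t 3 7 (by decide)) (phne i t 3 9 (by decide)) (phne i t 3 10 (by decide)) (phne i t 7 9 (by decide)) (phne i t 7 10 (by decide)) (phne i t 9 10 (by decide))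
      (of_decide_eq_true e1).symm (of_decide_eq_true e5).symm (of_decide_eq_true e9).symm (of_decide_eq_true e10).symm
  have c4_9 : (decide (H.Adj (φ i t 3) (φ i t 4))) = true → (decide (H.Adj (φ i t 8) (φ i t 4))) = true → (decide (H.Adj (φ i t 9) (φ i t 4))) = true → (decide (H.Adj (φ i t 10) (φ i t 4))) = true → False := fun e1 e6 e9 e10 =>
    no4 hdeg (φ i t 4) (φ i t 3) (φ i t 8) (φ i t 9) (φ i t 10) (phne i t 3 8 (by decide)) (phne i t 3 9 (by decide)) (phne i t 3 10 (by decide)) (phne i t 8 9 (by decide)) (phne i t 8 10 (by decide)) (phne i t 9 10 (by decide))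
      (of_decide_eq_true e1).symm (of_decide_eq_true e6).symm (of_decide_eq_true e9).symm (of_decide_eq_true e10).symm
  have c4_10 : (decide (H.Adj (φ i t 4) (φ i t 5))) = true → (decide (H.Adj (φ i t 7) (φ i t 4))) = true → (decide (H.Adj (φ i t 8) (φ i t 4))) = true → (decide (H.Adj (φ i t 9) (φ i t 4))) = true → False := fun e2 e5 e6 e9 =>
    no4 hdeg (φ i t 4) (φ i t 5) (φ i t 7) (φ i t 8) (φ i t 9) (phne i t 5 7 (by decide)) (phne i t 5 8 (by decide)) (phne i t 5 9 (by decide)) (phne i t 7 8 (by decide)) (phne i t 7 9 (by decide)) (phne i t 8 9 (by decide))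
      (of_decide_eq_true e2) (of_decide_eq_true e5).symm (of_decide_eq_true e6).symm (of_decide_eq_true e9).symm
  have c4_11 : (decide (H.Adj (φ i t 4) (φ i t 5))) = true → (decide (H.Adj (φ i t 7) (φ i t 4))) = true → (decide (H.Adj (φ i t 8) (φ i t 4))) = true → (decide (H.Adj (φ i t 10) (φ i t 4))) = true → False := fun e2 e5 e6 e10 =>
    no4 hdeg (φ i t 4) (φ i t 5) (φ i t 7) (φ i t 8) (φ i t 10) (phne i t 5 7 (by decide)) (phne i t 5 8 (by decide)) (phne i t 5 10 (by decide)) (phne i t 7 8 (by decide)) (phne i t 7 10 (by decide)) (phne i t 8 10 (by decide))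
      (of_decide_eq_true e2) (of_decide_eq_true e5).symm (of_decide_eq_true e6).symm (of_decide_eq_true e10).symm
  have c4_12 : (decide (H.Adj (φ i t 4) (φ i t 5))) = true → (decide (H.Adj (φ i t 7) (φ i t 4))) = true → (decide (H.Adj (φ i t 9) (φ i t 4))) = true → (decide (H.Adj (φ i t 10) (φ i t 4))) = true → False := fun e2 e5 e9 e10 =>
    no4 hdeg (φ i t 4) (φ i t 5) (φ i t 7) (φ i t 9) (φ i t 10) (phne i t 5 7 (by decide)) (phne i t 5 9 (by decide)) (phne i t 5 10 (by decide)) (phne i t 7 9 (by decide)) (phne i t 7 10 (by decide)) (phne i t 9 10 (by decide))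
      (of_decide_eq_true e2) (of_decide_eq_true e5).symm (of_decide_eq_true e9).symm (of_decide_eq_true e10).symm
  have c4_13 : (decide (H.Adj (φ i t 4) (φ i t 5))) = true → (decide (H.Adj (φ i t 8) (φ i t 4))) = true → (decide (H.Adj (φ i t 9) (φ i t 4))) = true → (decide (H.Adj (φ i t 10) (φ i t 4))) = true → False := fun e2 e6 e9 e10 =>
    no4 hdeg (φ i t 4) (φ i t 5) (φ i t 8) (φ i t 9) (φ i t 10) (phne i t 5 8 (by decide)) (phne i t 5 9 (by decide)) (phne i t 5 10 (by decide)) (phne i t 8 9 (by decide)) (phne i t 8 10 (by decide)) (phne i t 9 10 (by decide))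
      (of_decide_eq_true e2) (of_decide_eq_true e6).symm (of_decide_eq_true e9).symm (of_decide_eq_true e10).symm
  have c4_14 : (decide (H.Adj (φ i t 7) (φ i t 4))) = true → (decide (H.Adj (φ i t 8) (φ i t 4))) = true → (decide (H.Adj (φ i t 9) (φ i t 4))) = true → (decide (H.Adj (φ i t 10) (φ i t 4))) = true → False := fun e5 e6 e9 e10 =>
    no4 hdeg (φ i t 4) (φ i t 7) (φ i t 8) (φ i t 9) (φ i t 10) (phne i t 7 8 (by decide)) (phne i t 7 9 (by decide)) (phne i t 7 10 (by decide)) (phne i t 8 9 (by decide)) (phne i t 8 10 (by decide)) (phne i t 9 10 (by decide))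
      (of_decide_eq_true e5).symm (of_decide_eq_true e6).symm (of_decide_eq_true e9).symm (of_decide_eq_true e10).symm
  rcases keyCheck (decide (H.Adj (φ i t 2) (φ i t 3))) (decide (H.Adj (φ i t 3) (φ i t 4))) (decide (H.Adj (φ i t 4) (φ i t 5))) (decide (H.Adj (φ i t 5) (φ i t 6))) (decide (H.Adj (φ i t 7) (φ i t 3))) (decide (H.Adj (φ i t 7) (φ i t 4))) (decide (H.Adj (φ i t 8) (φ i t 4))) (decide (H.Adj (φ i t 8) (φ i t 5))) (decide (H.Adj (φ i t 9) (φ i t 3))) (decide (H.Adj (φ i t 9) (φ i t 4))) (decide (H.Adj (φ i t 10) (φ i t 4))) (decide (H.Adj (φ i t 10) (φ i t 5)))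
    c3 c5 c4_0 c4_1 c4_2 c4_3 c4_4 c4_5 c4_6 c4_7 c4_8 c4_9 c4_10 c4_11 c4_12 c4_13 c4_14 with hc | hc | hc | hc | ⟨hc, hc'⟩ | ⟨hc, hc'⟩ | ⟨hc, hc'⟩ | ⟨hc, hc'⟩
  · -- cd gone: K4 on 0,1,2,3
    refine Or.inl (containsK4_of (φ i t 0) (φ i t 1) (φ i t 2) (φ i t 3) ?_ ?_ ?_ ?_ ?_ ?_)
    · exact sd 0 1 (by decide) (hu 1)
    · exact sd 0 2 (by decide) (hu 2)
    · exact sd 0 3 (by decide) (hu 3)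
    · exact sd 1 2 (by decide) (hv 2)
    · exact sd 1 3 (by decide) (hv 3)
    · exact sd 2 3 (by decide) (of_decide_eq_false hc)
  · -- de gone: K4 on 0,1,3,4
    refine Or.inl (containsK4_of (φ i t 0) (φ i t 1) (φ i t 3) (φ i t 4) ?_ ?_ ?_ ?_ ?_ ?_)
    · exact sd 0 1 (by decide) (hu 1)
    · exact sd 0 3 (by decide) (hu 3)
    · exact sd 0 4 (by decide) (hu 4)
    · exact sd 1 3 (by decide) (hv 3)
    · exact sd 1 4 (by decide) (hv 4)
    · exact sd 3 4 (by decide) (of_decide_eq_false hc)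
  · -- ef gone
    refine Or.inl (containsK4_of (φ i t 0) (φ i t 1) (φ i t 4) (φ i t 5) ?_ ?_ ?_ ?_ ?_ ?_)
    · exact sd 0 1 (by decide) (hu 1)
    · exact sd 0 4 (by decide) (hu 4)
    · exact sd 0 5 (by decide) (hu 5)
    · exact sd 1 4 (by decide) (hv 4)
    · exact sd 1 5 (by decide) (hv 5)
    · exact sd 4 5 (by decide) (of_decide_eq_false hc)
  · -- fg gone
    refine Or.inl (containsK4_of (φ i t 0) (φ i t 1) (φ i t 5) (φ i t 6) ?_ ?_ ?_ ?_ ?_ ?_)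
    · exact sd 0 1 (by decide) (hu 1)
    · exact sd 0 5 (by decide) (hu 5)
    · exact sd 0 6 (by decide) (hu 6)
    · exact sd 1 5 (by decide) (hv 5)
    · exact sd 1 6 (by decide) (hv 6)
    · exact sd 5 6 (by decide) (of_decide_eq_false hc)
  · -- h gadget (3,7,4) side a
    exact Or.inr ⟨3, 7, 4, true, by decide, by decide, by decide, by decide, by decide, by decide,
      sd 0 3 (by decide) (hu 3), sd 1 3 (by decide) (hv 3),
      sd 0 4 (by decide) (hu 4), sd 1 4 (by decide) (hv 4),
      sd 3 7 (by decide) (fun hh => of_decide_eq_false hc hh.symm), sd 7 4 (by decide) (of_decide_eq_false hc'),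
      ⟨fun _ => sd 0 7 (by decide) (hu 7), fun hh => absurd hh (by simp)⟩⟩
  · -- i gadget (4,8,5) side a
    exact Or.inr ⟨4, 8, 5, true, by decide, by decide, by decide, by decide, by decide, by decide,
      sd 0 4 (by decide) (hu 4), sd 1 4 (by decide) (hv 4),
      sd 0 5 (by decide) (hu 5), sd 1 5 (by decide) (hv 5),
      sd 4 8 (by decide) (fun hh => of_decide_eq_false hc hh.symm), sd 8 5 (by decide) (of_decide_eq_false hc'),
      ⟨fun _ => sd 0 8 (by decide) (hu 8), fun hh => absurd hh (by simp)⟩⟩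
  · -- j gadget (3,9,4) side b
    exact Or.inr ⟨3, 9, 4, false, by decide, by decide, by decide, by decide, by decide, by decide,
      sd 0 3 (by decide) (hu 3), sd 1 3 (by decide) (hv 3),
      sd 0 4 (by decide) (hu 4), sd 1 4 (by decide) (hv 4),
      sd 3 9 (by decide) (fun hh => of_decide_eq_false hc hh.symm), sd 9 4 (by decide) (of_decide_eq_false hc'),
      ⟨fun hh => absurd hh (by simp), fun _ => sd 1 9 (by decide) (hv 9)⟩⟩
  · -- k gadget (4,10,5) side b
    exact Or.inr ⟨4, 10, 5, false, by decide, by decide, by decide, by decide, by decide, by decide,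
      sd 0 4 (by decide) (hu 4), sd 1 4 (by decide) (hv 4),
      sd 0 5 (by decide) (hu 5), sd 1 5 (by decide) (hv 5),
      sd 4 10 (by decide) (fun hh => of_decide_eq_false hc hh.symm), sd 10 5 (by decide) (of_decide_eq_false hc'),
      ⟨fun hh => absurd hh (by simp), fun _ => sd 1 10 (by decide) (hv 10)⟩⟩

def idx : V1 → Fin 4
  | Sum.inl (Sum.inl _) => 0
  | Sum.inl (Sum.inr j) => j
  | Sum.inr (j, _) => j

def ψf (i : Fin 4) (τ : Fin 6 → Fin 9) (x y z : Fin 6 → Fin 11) :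
    Sum (Fin 2) (Fin 6 × Fin 3) → V1
  | Sum.inl a => if a = 0 then uu else vv i
  | Sum.inr (j, r) => φ i (τ j) (if r = 0 then x j else if r = 1 then y j else z j)

lemma ψf_inj (i : Fin 4) (τ : Fin 6 → Fin 9) (x y z : Fin 6 → Fin 11)
    (hτ : Function.Injective τ)
    (hx2 : ∀ j, 2 ≤ (x j).val) (hy2 : ∀ j, 2 ≤ (y j).val) (hz2 : ∀ j, 2 ≤ (z j).val)
    (hxy : ∀ j, x j ≠ y j) (hxz : ∀ j, x j ≠ z j) (hyz : ∀ j, y j ≠ z j) :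
    Function.Injective (ψf i τ x y z) := by
  have hm2 : ∀ (j : Fin 6) (r : Fin 3), 2 ≤ ((if r = 0 then x j else if r = 1 then y j else z j) : Fin 11).val := by
    intro j r
    split_ifs
    · exact hx2 j
    · exact hy2 j
    · exact hz2 j
  intro w w' h
  rcases w with a | ⟨j, r⟩ <;> rcases w' with a' | ⟨j', r'⟩
  · simp only [ψf] at h
    fin_cases a <;> fin_cases a' <;> simp_all [uu, vv]
  · exfalso
    simp only [ψf] at h
    rw [phi_inr _ _ _ (hm2 j' r')] at h
    fin_cases a <;> simp [uu, vv] at h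
  · exfalso
    simp only [ψf] at h
    rw [phi_inr _ _ _ (hm2 j r)] at h
    fin_cases a' <;> simp [uu, vv] at h
  · simp only [ψf] at h
    rw [phi_inr _ _ _ (hm2 j r), phi_inr _ _ _ (hm2 j' r')] at h
    simp only [Sum.inr.injEq, Prod.mk.injEq, Fin.mk.injEq] at h
    obtain ⟨-, hτe, hval⟩ := h
    have hj : j = j' := hτ hτe
    subst hj
    have hm2j := hm2 j r
    have hm2j' := hm2 j r'
    have hmeq : (if r = 0 then x j else if r = 1 then y j else z j)
        = (if r' = 0 then x j else if r' = 1 then y j else z j) := by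
      apply Fin.ext; omega
    fin_cases r <;> fin_cases r' <;> simp_all <;>
      first
        | exact absurd hmeq (hxy j) | exact absurd hmeq.symm (hxy j)
        | exact absurd hmeq (hxz j) | exact absurd hmeq.symm (hxz j)
        | exact absurd hmeq (hyz j) | exact absurd hmeq.symm (hyz j)


/-- For every subgraph `H` of `G1` with maximum degree at most 3, the graph `G1 − E(H)`
contains a subgraph isomorphic to `K4` or to a member of 𝒥. -/
theorem statement3 (H : SimpleGraph (Sum (Sum Unit (Fin 4)) (Fin 4 × (Fin 9 × Fin 9))))
    (hle : H ≤ G1) (hdeg : ∀ v, (H.neighborSet v).ncard ≤ 3) :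
    ContainsSub K4 (G1 \ H) ∨ ∃ s : Fin 6 → Bool, ContainsSub (Jfam s) (G1 \ H) := by
  haveI : DecidableRel H.Adj := Classical.decRel _
  have hNu : (H.neighborFinset uu).card ≤ 3 := by
    have := hdeg uu
    rwa [Set.ncard_eq_toFinset_card', ← SimpleGraph.neighborFinset_def] at this
  have hex : ∃ i : Fin 4, i ∉ (H.neighborFinset uu).image idx := by
    by_contra hcon
    push_neg at hcon
    have hsub : (Finset.univ : Finset (Fin 4)) ⊆ (H.neighborFinset uu).image idx :=
      fun x _ => hcon x
    have h1 := Finset.card_le_card hsub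
    have h2 := Finset.card_image_le (s := H.neighborFinset uu) (f := idx)
    simp [Finset.card_univ] at h1
    omega
  obtain ⟨i, hi⟩ := hex
  have hclean : ∀ x : V1, H.Adj uu x → idx x ≠ i := by
    intro x hx he
    refine hi (he ▸ Finset.mem_image_of_mem idx ?_)
    rw [SimpleGraph.mem_neighborFinset]
    exact hx
  have huadj : ∀ (t : Fin 9) (m : Fin 11), ¬ H.Adj uu (φ i t m) := by
    intro t m ha
    by_cases h0 : m.val = 0
    · have hm : m = 0 := Fin.ext h0
      subst hm
      exact H.irrefl ha
    · by_cases h1 : m.val = 1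
      · have hm : m = 1 := Fin.ext h1
        subst hm
        exact hclean _ ha rfl
      · have h2 : 2 ≤ m.val := by omega
        have h3 := hclean _ ha
        rw [phi_inr i t m h2] at h3
        exact h3 rfl
  have hNv : (H.neighborFinset (vv i)).card ≤ 3 := by
    have := hdeg (vv i)
    rwa [Set.ncard_eq_toFinset_card', ← SimpleGraph.neighborFinset_def] at this
  set badF : Finset (Fin 9) := Finset.univ.filter (fun t => ∃ m : Fin 11, H.Adj (vv i) (φ i t m)) with hbadF
  have hwitex : ∀ t ∈ badF, ∃ m : Fin 11, H.Adj (vv i) (φ i t m) := by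
    intro t ht
    exact (Finset.mem_filter.mp ht).2
  have htot : ∀ t : Fin 9, ∃ m : Fin 11, t ∈ badF → H.Adj (vv i) (φ i t m) := by
    intro t
    by_cases ht : t ∈ badF
    · obtain ⟨m, hm⟩ := hwitex t ht
      exact ⟨m, fun _ => hm⟩
    · exact ⟨0, fun hc => absurd hc ht⟩
  choose w hw using htot
  have hwit2 : ∀ t ∈ badF, 2 ≤ (w t).val := by
    intro t ht
    have hadj := hw t ht
    by_contra hlt
    push_neg at hlt
    by_cases h0 : (w t).val = 0
    · have hm : w t = 0 := Fin.ext h0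
      rw [hm] at hadj
      exact huadj t 1 hadj.symm
    · have h1 : (w t).val = 1 := by omega
      have hm : w t = 1 := Fin.ext h1
      rw [hm] at hadj
      exact H.irrefl hadj
  have hbad3 : badF.card ≤ 3 := by
    have hmaps : ∀ t ∈ badF, φ i t (w t) ∈ H.neighborFinset (vv i) := by
      intro t ht
      rw [SimpleGraph.mem_neighborFinset]
      exact hw t ht
    have hinj : Set.InjOn (fun t => φ i t (w t)) badF := by
      intro t1 h1 t2 h2 he
      simp only at he
      rw [phi_inr i t1 (w t1) (hwit2 t1 h1), phi_inr i t2 (w t2) (hwit2 t2 h2)] at he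
      simp only [Sum.inr.injEq, Prod.mk.injEq] at he
      exact he.2.1
    exact (Finset.card_le_card_of_injOn _ hmaps hinj).trans hNv
  have hgood : 6 ≤ badFᶜ.card := by
    have hcc := Finset.card_compl badF
    have : Fintype.card (Fin 9) = 9 := by simp
    omega
  obtain ⟨s6, hs6sub, hs6card⟩ := Finset.exists_subset_card_eq hgood
  set τ : Fin 6 → Fin 9 := fun j => ((s6.orderIsoOfFin hs6card) j).val with hτdef
  have hτinj : Function.Injective τ := fun a b hab =>
    (s6.orderIsoOfFin hs6card).injective (Subtype.ext hab)
  have hτgood : ∀ (j : Fin 6) (m : Fin 11), ¬ H.Adj (vv i) (φ i (τ j) m) := by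
    intro j m hadj
    have hmem : τ j ∈ badF := Finset.mem_filter.mpr ⟨Finset.mem_univ _, ⟨m, hadj⟩⟩
    have hmem' : τ j ∈ badFᶜ := hs6sub ((s6.orderIsoOfFin hs6card) j).2
    exact (Finset.mem_compl.mp hmem') hmem
  by_cases hK : ContainsSub K4 (G1 \ H)
  · exact Or.inl hK
  have hg : ∀ j : Fin 6, Gadget H i (τ j) := fun j =>
    (copyLemma H hdeg i (τ j) (huadj (τ j)) (hτgood j)).resolve_left hK
  choose x y z sb g1 g2 g3 g4 g5 g6 g7 g8 g9 g10 g11 g12 g13 g14 using hg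
  refine Or.inr ⟨sb, ⟨ψf i τ x y z, ψf_inj i τ x y z hτinj g1 g2 g3 g4 g5 g6⟩, ?_⟩
  have haux : ∀ a b : Sum (Fin 2) (Fin 6 × Fin 3),
      ((a = Sum.inl 0 ∧ b = Sum.inl 1) ∨
        ∃ jj : Fin 6,
          (a = Sum.inl 0 ∧ b = Sum.inr (jj, 0)) ∨
          (a = Sum.inl 1 ∧ b = Sum.inr (jj, 0)) ∨
          (a = Sum.inl 0 ∧ b = Sum.inr (jj, 2)) ∨
          (a = Sum.inl 1 ∧ b = Sum.inr (jj, 2)) ∨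
          (a = Sum.inr (jj, 0) ∧ b = Sum.inr (jj, 1)) ∨
          (a = Sum.inr (jj, 1) ∧ b = Sum.inr (jj, 2)) ∨
          (sb jj = true ∧ a = Sum.inl 0 ∧ b = Sum.inr (jj, 1)) ∨
          (sb jj = false ∧ a = Sum.inl 1 ∧ b = Sum.inr (jj, 1))) →
      (G1 \ H).Adj (ψf i τ x y z a) (ψf i τ x y z b) := by
    intro a b hr
    have h01 : (G1 \ H).Adj uu (vv i) := by
      rw [SimpleGraph.sdiff_adj]
      exact ⟨adjG1 i (τ 0) (by decide : J3.Adj 0 1), huadj (τ 0) 1⟩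
    rcases hr with ⟨rfl, rfl⟩ | ⟨jj, hc⟩
    · exact h01
    · rcases hc with ⟨rfl, rfl⟩ | ⟨rfl, rfl⟩ | ⟨rfl, rfl⟩ | ⟨rfl, rfl⟩ | ⟨rfl, rfl⟩ |
        ⟨rfl, rfl⟩ | ⟨hs, rfl, rfl⟩ | ⟨hs, rfl, rfl⟩
      · exact g7 jj
      · exact g8 jj
      · exact g9 jj
      · exact g10 jj
      · exact g11 jj
      · exact g12 jj
      · exact g13 jj hs
      · exact g14 jj hs
  intro a b hab
  unfold Jfam at hab
  rw [SimpleGraph.fromRel_adj] at hab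
  obtain ⟨hne, hr | hr⟩ := hab
  · exact haux a b hr
  · exact (haux b a hr).symm
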